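/- Fix α ∈ (0,1) and b > 0 with (2−b)/(2+b) > α (equivalently (1−α)(1−b/2) ≥ αb) and b < 2. Then the function r(x, y) = y^α·((b/2)|x|² − 1) is convex and negative on the cylinder Z = {(x,y) ∈ ℝ^{n−1} × ℝ : |x| ≤ 1, 0 < y < 1}. -/

import Mathlib

open BigOperators

open Set

set_option maxHeartbeats 1000000 in
lemma seg_convexOn (α b c d A B C : ℝ) (hα0 : 0 < α) (hα1 : α < 1)
    (hb0 : 0 < b) (hb2 : b < 2) (hkey : α * (2 + b) ≤ 2 - b)
    (hA0 : 0 ≤ A) (hC0 : 0 ≤ C) (hB : B ^ 2 ≤ A * C)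
    (hA1 : A ≤ 1) (hS1 : A + 2 * B + C ≤ 1) (hc : 0 < c) (hcd : 0 < c + d) :
    ConvexOn ℝ (Set.Icc (0:ℝ) 1)
      (fun t => (c + d * t) ^ α * ((b / 2) * (A + 2 * B * t + C * t ^ 2) - 1)) := by
  have hg : ∀ t ∈ Set.Icc (0:ℝ) 1, 0 < c + d * t := by
    intro t ht
    rcases eq_or_lt_of_le ht.2 with h | h
    · rw [h]; linarith
    · nlinarith [mul_pos (sub_pos.2 h) hc, mul_nonneg ht.1 hcd.le]
  have hgd : ∀ t : ℝ, HasDerivAt (fun t => c + d * t) d t := by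
    intro t
    simpa using ((hasDerivAt_id t).const_mul d).const_add c
  have hqd : ∀ t : ℝ, HasDerivAt (fun t : ℝ => (b / 2) * (A + 2 * B * t + C * t ^ 2) - 1)
      (b * (B + C * t)) t := by
    intro t
    have ha : HasDerivAt (fun t : ℝ => A + 2 * B * t) (2 * B) t := by
      simpa using ((hasDerivAt_id t).const_mul (2 * B)).const_add A
    have h1 := ((ha.add ((hasDerivAt_pow 2 t).const_mul C)).const_mul (b / 2)).sub_const 1
    refine h1.congr_deriv ?_
    push_cast
    ring
  have hbq : ∀ t : ℝ, HasDerivAt (fun t : ℝ => b * (B + C * t)) (b * C) t := by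
    intro t
    simpa using (((hasDerivAt_id t).const_mul C).const_add B).const_mul b
  have hfd : ∀ t ∈ Set.Ioo (0:ℝ) 1,
      HasDerivAt (fun t => (c + d * t) ^ α * ((b / 2) * (A + 2 * B * t + C * t ^ 2) - 1))
        (d * α * (c + d * t) ^ (α - 1) * ((b / 2) * (A + 2 * B * t + C * t ^ 2) - 1)
          + (c + d * t) ^ α * (b * (B + C * t))) t := by
    intro t ht
    have hpos := hg t (Ioo_subset_Icc_self ht)
    exact ((hgd t).rpow_const (p := α) (Or.inl hpos.ne')).mul (hqd t)
  have hf1d : ∀ t ∈ Set.Ioo (0:ℝ) 1,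
      HasDerivAt (fun t => d * α * (c + d * t) ^ (α - 1) * ((b / 2) * (A + 2 * B * t + C * t ^ 2) - 1)
          + (c + d * t) ^ α * (b * (B + C * t)))
        (d * α * (d * (α - 1) * (c + d * t) ^ (α - 1 - 1)) * ((b / 2) * (A + 2 * B * t + C * t ^ 2) - 1)
          + d * α * (c + d * t) ^ (α - 1) * (b * (B + C * t))
          + (d * α * (c + d * t) ^ (α - 1) * (b * (B + C * t)) + (c + d * t) ^ α * (b * C))) t := by
    intro t ht
    have hpos := hg t (Ioo_subset_Icc_self ht)
    have h3 : HasDerivAt (fun t : ℝ => d * α * (c + d * t) ^ (α - 1))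
        (d * α * (d * (α - 1) * (c + d * t) ^ (α - 1 - 1))) t :=
      ((hgd t).rpow_const (p := α - 1) (Or.inl hpos.ne')).const_mul (d * α)
    exact (h3.mul (hqd t)).add (((hgd t).rpow_const (p := α) (Or.inl hpos.ne')).mul (hbq t))
  refine convexOn_of_hasDerivWithinAt2_nonneg (convex_Icc 0 1)
    (f' := fun t => d * α * (c + d * t) ^ (α - 1) * ((b / 2) * (A + 2 * B * t + C * t ^ 2) - 1)
          + (c + d * t) ^ α * (b * (B + C * t)))
    (f'' := fun t => d * α * (d * (α - 1) * (c + d * t) ^ (α - 1 - 1)) * ((b / 2) * (A + 2 * B * t + C * t ^ 2) - 1)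
          + d * α * (c + d * t) ^ (α - 1) * (b * (B + C * t))
          + (d * α * (c + d * t) ^ (α - 1) * (b * (B + C * t)) + (c + d * t) ^ α * (b * C)))
    ?_ ?_ ?_ ?_
  · have hgc : Continuous fun t : ℝ => c + d * t := by continuity
    exact (hgc.continuousOn.rpow_const (fun x _ => Or.inr hα0.le)).mul
      (by continuity : Continuous fun t : ℝ => (b / 2) * (A + 2 * B * t + C * t ^ 2) - 1).continuousOn
  · rw [interior_Icc]
    intro t ht
    exact (hfd t ht).hasDerivWithinAt
  · rw [interior_Icc]
    intro t ht
    exact (hf1d t ht).hasDerivWithinAt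
  · rw [interior_Icc]
    intro t ht
    have hpos := hg t (Ioo_subset_Icc_self ht)
    have hSle1 : A + 2 * B * t + C * t ^ 2 ≤ 1 := by
      nlinarith [mul_nonneg (mul_nonneg hC0 ht.1.le) (by linarith [ht.2] : (0:ℝ) ≤ 1 - t),
        mul_le_mul_of_nonneg_left hA1 (by linarith [ht.2] : (0:ℝ) ≤ 1 - t),
        mul_le_mul_of_nonneg_left hS1 ht.1.le]
    have hP : (B + C * t) ^ 2 ≤ (A + 2 * B * t + C * t ^ 2) * C := by nlinarith [hB]
    have hbS : (b / 2) * (A + 2 * B * t + C * t ^ 2) < 1 := by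
      nlinarith [mul_le_mul_of_nonneg_left hSle1 (by linarith : (0:ℝ) ≤ b / 2)]
    have hK1 : 0 < α * (1 - α) * (1 - (b / 2) * (A + 2 * B * t + C * t ^ 2)) :=
      mul_pos (mul_pos hα0 (by linarith)) (by linarith)
    have hq2 : α * b * (A + 2 * B * t + C * t ^ 2)
        ≤ (1 - α) * (1 - (b / 2) * (A + 2 * B * t + C * t ^ 2)) := by
      nlinarith [mul_nonneg (by linarith : (0:ℝ) ≤ 1 - (A + 2 * B * t + C * t ^ 2))
        (by positivity : (0:ℝ) ≤ b * (1 + α))]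
    have hdisc : (α * b * (B + C * t)) ^ 2
        ≤ (α * (1 - α) * (1 - (b / 2) * (A + 2 * B * t + C * t ^ 2))) * (b * C) := by
      nlinarith [mul_le_mul_of_nonneg_left hq2 (by positivity : (0:ℝ) ≤ α * b * C),
        mul_le_mul_of_nonneg_left hP (by positivity : (0:ℝ) ≤ α ^ 2 * b ^ 2)]
    have e1 : (c + d * t) ^ (α - 1 - 1) = (c + d * t) ^ (α - 2) := by
      rw [show α - 1 - 1 = α - 2 from by ring]
    have e2 : (c + d * t) ^ (α - 1) = (c + d * t) ^ (α - 2) * (c + d * t) := by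
      rw [show α - 1 = (α - 2) + 1 by ring, Real.rpow_add_one hpos.ne']
    have e3 : (c + d * t) ^ α = (c + d * t) ^ (α - 2) * (c + d * t) ^ 2 := by
      rw [← Real.rpow_natCast (c + d * t) 2, ← Real.rpow_add hpos]
      norm_num
    have hw : 0 ≤ (c + d * t) ^ (α - 2) := Real.rpow_nonneg hpos.le _
    have hE : 0 ≤ (α * (1 - α) * (1 - (b / 2) * (A + 2 * B * t + C * t ^ 2))) * d ^ 2
        + 2 * (α * b * (B + C * t)) * (d * (c + d * t)) + (b * C) * (c + d * t) ^ 2 := by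
      nlinarith [sq_nonneg ((α * (1 - α) * (1 - (b / 2) * (A + 2 * B * t + C * t ^ 2))) * d
          + (α * b * (B + C * t)) * (c + d * t)),
        mul_nonneg (sub_nonneg.2 hdisc) (sq_nonneg (c + d * t)), hK1, sq_nonneg (c + d * t)]
    simp only [e1, e2, e3]
    nlinarith [mul_nonneg hw hE]


/-- r(x,y) = y^α((b/2)|x|² - 1) is convex and negative on the
cylinder Z = {|x| ≤ 1, 0 < y < 1}. -/
theorem stmt_11 {m : ℕ} (α b : ℝ) (hα0 : 0 < α) (hα1 : α < 1)
    (hb0 : 0 < b) (hb2 : b < 2) (hαb : (2 - b) / (2 + b) > α) :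
    ConvexOn ℝ
      {p : (Fin m → ℝ) × ℝ | (∑ i, (p.1 i) ^ 2) ≤ 1 ∧ 0 < p.2 ∧ p.2 < 1}
      (fun p => p.2 ^ α * ((b / 2) * ∑ i, (p.1 i) ^ 2 - 1)) ∧
    ∀ p ∈ {p : (Fin m → ℝ) × ℝ | (∑ i, (p.1 i) ^ 2) ≤ 1 ∧ 0 < p.2 ∧ p.2 < 1},
      p.2 ^ α * ((b / 2) * ∑ i, (p.1 i) ^ 2 - 1) < 0 := by
  have hkey : α * (2 + b) ≤ 2 - b := by
    have h2b : (0:ℝ) < 2 + b := by linarith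
    have := (lt_div_iff₀ h2b).mp hαb
    linarith
  constructor
  · constructor
    · -- convexity of Z
      intro p hp q hq u v hu hv huv
      obtain ⟨hpA, hpy0, hpy1⟩ := hp
      obtain ⟨hqA, hqy0, hqy1⟩ := hq
      have hPC : (∑ i, p.1 i * q.1 i) ^ 2 ≤ (∑ i, p.1 i ^ 2) * ∑ i, q.1 i ^ 2 :=
        Finset.sum_mul_sq_le_sq_mul_sq Finset.univ _ _
      have hA0 : (0:ℝ) ≤ ∑ i, p.1 i ^ 2 := Finset.sum_nonneg fun i _ => sq_nonneg _
      have hC0 : (0:ℝ) ≤ ∑ i, q.1 i ^ 2 := Finset.sum_nonneg fun i _ => sq_nonneg _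
      have hP1 : (∑ i, p.1 i * q.1 i) ≤ 1 := by
        nlinarith [hPC, mul_le_one₀ hpA hC0 hqA]
      refine ⟨?_, ?_, ?_⟩
      · have hexp : ∑ i, ((u • p + v • q).1 i) ^ 2
            = u ^ 2 * (∑ i, p.1 i ^ 2) + 2 * u * v * (∑ i, p.1 i * q.1 i)
              + v ^ 2 * (∑ i, q.1 i ^ 2) := by
          rw [Finset.mul_sum, Finset.mul_sum, Finset.mul_sum, ← Finset.sum_add_distrib,
            ← Finset.sum_add_distrib]
          refine Finset.sum_congr rfl fun i _ => ?_
          simp [Prod.smul_fst, Pi.smul_apply, smul_eq_mul]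
          ring
        rw [hexp]
        nlinarith [mul_le_mul_of_nonneg_left hpA (sq_nonneg u),
          mul_le_mul_of_nonneg_left hqA (sq_nonneg v),
          mul_le_mul_of_nonneg_left hP1 (by positivity : (0:ℝ) ≤ 2 * u * v)]
      · show 0 < u * p.2 + v * q.2
        rcases eq_or_lt_of_le hu with h | h
        · have hv1 : v = 1 := by linarith
          rw [← h, hv1]; simpa using hqy0
        · nlinarith [mul_pos h hpy0, mul_nonneg hv hqy0.le]
      · show u * p.2 + v * q.2 < 1
        rcases eq_or_lt_of_le hu with h | h
        · have hv1 : v = 1 := by linarith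
          rw [← h, hv1]; simpa using hqy1
        · nlinarith [mul_lt_mul_of_pos_left hpy1 h, mul_le_mul_of_nonneg_left hqy1.le hv]
    · -- convexity inequality
      intro p hp q hq u v hu hv huv
      obtain ⟨hpA, hpy0, hpy1⟩ := hp
      obtain ⟨hqA, hqy0, hqy1⟩ := hq
      have hu' : u = 1 - v := by linarith
      have hsum : ∀ s : ℝ, ∑ i, (p.1 i + s * (q.1 i - p.1 i)) ^ 2
          = (∑ i, p.1 i ^ 2) + 2 * (∑ i, p.1 i * (q.1 i - p.1 i)) * s
            + (∑ i, (q.1 i - p.1 i) ^ 2) * s ^ 2 := by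
        intro s
        rw [Finset.sum_mul, Finset.mul_sum, Finset.sum_mul, ← Finset.sum_add_distrib,
          ← Finset.sum_add_distrib]
        refine Finset.sum_congr rfl fun i _ => ?_
        ring
      have hABC1 : (∑ i, p.1 i ^ 2) + 2 * (∑ i, p.1 i * (q.1 i - p.1 i))
          + (∑ i, (q.1 i - p.1 i) ^ 2) = ∑ i, q.1 i ^ 2 := by
        have h1 := hsum 1
        have h2 : ∑ i, (p.1 i + 1 * (q.1 i - p.1 i)) ^ 2 = ∑ i, q.1 i ^ 2 :=
          Finset.sum_congr rfl fun i _ => by ring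
        rw [h2] at h1
        linarith
      have hB : (∑ i, p.1 i * (q.1 i - p.1 i)) ^ 2
          ≤ (∑ i, p.1 i ^ 2) * ∑ i, (q.1 i - p.1 i) ^ 2 :=
        Finset.sum_mul_sq_le_sq_mul_sq Finset.univ _ _
      have hA0 : (0:ℝ) ≤ ∑ i, p.1 i ^ 2 := Finset.sum_nonneg fun i _ => sq_nonneg _
      have hC0 : (0:ℝ) ≤ ∑ i, (q.1 i - p.1 i) ^ 2 := Finset.sum_nonneg fun i _ => sq_nonneg _
      have haux := seg_convexOn α b p.2 (q.2 - p.2) (∑ i, p.1 i ^ 2)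
        (∑ i, p.1 i * (q.1 i - p.1 i)) (∑ i, (q.1 i - p.1 i) ^ 2)
        hα0 hα1 hb0 hb2 hkey hA0 hC0 hB hpA (by linarith) hpy0 (by linarith)
      have key := haux.2 (show (0:ℝ) ∈ Set.Icc (0:ℝ) 1 by norm_num)
        (show (1:ℝ) ∈ Set.Icc (0:ℝ) 1 by norm_num) hu hv huv
      simp only [smul_eq_mul, mul_zero, mul_one, zero_add] at key
      rw [show p.2 + 0 = p.2 from add_zero _,
        show p.2 + (q.2 - p.2) = q.2 from by ring,
        show (∑ i, p.1 i ^ 2) + 0 + (∑ i, (q.1 i - p.1 i) ^ 2) * (0:ℝ) ^ 2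
            = ∑ i, p.1 i ^ 2 from by ring,
        show (∑ i, p.1 i ^ 2) + 2 * (∑ i, p.1 i * (q.1 i - p.1 i))
            + (∑ i, (q.1 i - p.1 i) ^ 2) * (1:ℝ) ^ 2 = ∑ i, q.1 i ^ 2 from by
          rw [one_pow, mul_one]; exact hABC1] at key
      have emid : ∑ i, ((u • p + v • q).1 i) ^ 2
          = (∑ i, p.1 i ^ 2) + 2 * (∑ i, p.1 i * (q.1 i - p.1 i)) * v
            + (∑ i, (q.1 i - p.1 i) ^ 2) * v ^ 2 := by
        rw [← hsum v]
        refine Finset.sum_congr rfl fun i _ => ?_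
        simp [Prod.smul_fst, Pi.smul_apply, smul_eq_mul, hu']
        ring
      have emid2 : (u • p + v • q).2 = p.2 + (q.2 - p.2) * v := by
        simp [Prod.smul_snd, smul_eq_mul, hu']
        ring
      show ((u • p + v • q).2) ^ α * ((b / 2) * ∑ i, ((u • p + v • q).1 i) ^ 2 - 1)
        ≤ u • (p.2 ^ α * ((b / 2) * ∑ i, p.1 i ^ 2 - 1))
          + v • (q.2 ^ α * ((b / 2) * ∑ i, q.1 i ^ 2 - 1))
      rw [emid, emid2]
      simp only [smul_eq_mul]
      exact key
  · -- negativity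
    rintro p ⟨hpA, hpy0, hpy1⟩
    have h1 : 0 < p.2 ^ α := Real.rpow_pos_of_pos hpy0 α
    have hS0 : (0:ℝ) ≤ ∑ i, p.1 i ^ 2 := Finset.sum_nonneg fun i _ => sq_nonneg _
    have h2 : (b / 2) * ∑ i, p.1 i ^ 2 - 1 < 0 := by
      nlinarith [mul_le_mul_of_nonneg_left hpA (by linarith : (0:ℝ) ≤ b / 2)]
    exact mul_neg_of_pos_of_neg h1 h2
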